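/- Let p ∈ K[X] be monic irreducible with p(0) ≠ 0 such that reverse(p) is not a scalar multiple of p, let p̄₀ = p(0)⁻¹ • reverse(p), and let u be a symplectic transformation of E with minimal polynomial p^k · p̄₀^k. Then the group of symplectic transformations of E commuting with u is isomorphic (as a group) to the group of K-linear automorphisms of the subspace E¹ = ker p(u)^k that commute with the restriction of u to E¹. -/

import Mathlib

open Polynomial

/-- For a symplectic `u` with minimal polynomial `p^k * p̄₀^k` (`p` monic irreducible,
`p(0) ≠ 0`, `reverse p` not a scalar multiple of `p`, `p̄₀ = p(0)⁻¹ • reverse p`), the group of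
symplectic transformations commuting with `u` is isomorphic to the group of linear automorphisms
of `E¹ = ker p(u)^k` commuting with the restriction of `u` to `E¹`: there is a bijection
respecting composition. -/
lemma aux_commute_aeval {K A : Type*} [CommSemiring K] [Ring A] [Algebra K A]
    {r s : A} (h : Commute r s) (f : K[X]) : Commute r (aeval s f) := by
  induction f using Polynomial.induction_on' with
  | add f g hf hg => rw [map_add]; exact hf.add_right hg
  | monomial n a =>
    rw [aeval_monomial]
    exact (Algebra.commute_algebraMap_right a r).mul_right (h.pow_right n)

lemma aux_rev {K A : Type*} [CommSemiring K] [Ring A] [Algebra K A]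
    (t s : A) (hts : t * s = 1) (f : K[X]) :
    t ^ f.natDegree * aeval s f.reverse = aeval t f := by
  have hpow : ∀ i : ℕ, t ^ i * s ^ i = 1 := by
    intro i
    induction i with
    | zero => simp
    | succ n ih =>
      rw [pow_succ, pow_succ']
      calc t ^ n * t * (s * s ^ n) = t ^ n * (t * s) * s ^ n := by
            rw [mul_assoc, mul_assoc, ← mul_assoc t s, mul_assoc]
        _ = 1 := by rw [hts, mul_one, ih]
  have h1 : aeval s f.reverse = ∑ i ∈ Finset.range (f.natDegree + 1), f.reverse.coeff i • s ^ i :=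
    aeval_eq_sum_range' (Nat.lt_succ_of_le f.reverse_natDegree_le) s
  rw [h1, Finset.mul_sum]
  rw [aeval_eq_sum_range' (Nat.lt_succ_self f.natDegree) t]
  rw [show (∑ i ∈ Finset.range (f.natDegree + 1), f.coeff i • t ^ i)
       = ∑ i ∈ Finset.range (f.natDegree + 1), f.coeff (f.natDegree - i) • t ^ (f.natDegree - i)
     from (Finset.sum_range_reflect (fun j => f.coeff j • t ^ j) (f.natDegree + 1)).symm]
  refine Finset.sum_congr rfl fun i hi => ?_
  have hid : i ≤ f.natDegree := Nat.lt_succ_iff.mp (Finset.mem_range.mp hi)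
  rw [coeff_reverse, revAt_le hid, mul_smul_comm]
  have ht : t ^ f.natDegree * s ^ i = t ^ (f.natDegree - i) := by
    have : t ^ f.natDegree = t ^ (f.natDegree - i) * t ^ i := by
      rw [← pow_add, Nat.sub_add_cancel hid]
    rw [this, mul_assoc, hpow i, mul_one]
  rw [ht]


set_option maxHeartbeats 1000000 in
theorem stmt_10 {K E : Type*} [Field K] (hchar : (2 : K) ≠ 0)
    [AddCommGroup E] [Module K E] [FiniteDimensional K E]
    (B : E →ₗ[K] E →ₗ[K] K) (halt : ∀ x, B x x = 0)
    (hnd : ∀ x, (∀ y, B x y = 0) → x = 0)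
    (u : E ≃ₗ[K] E) (hu : ∀ x y, B (u x) (u y) = B x y)
    (p : K[X]) (hp : p.Monic) (hirr : Irreducible p) (hp0 : p.eval 0 ≠ 0)
    (hns : ¬ ∃ c : K, p.reverse = c • p)
    (k : ℕ)
    (hmin : minpoly K (u : Module.End K E) = p ^ k * ((p.eval 0)⁻¹ • p.reverse) ^ k)
    (E₁ : Submodule K E)
    (hE₁ : E₁ = LinearMap.ker ((aeval (u : Module.End K E) p) ^ k))
    (hinv : ∀ x ∈ E₁, (u : E →ₗ[K] E) x ∈ E₁) :
    ∃ φ : {w : E ≃ₗ[K] E // (∀ x y, B (w x) (w y) = B x y) ∧ ∀ x, w (u x) = u (w x)} ≃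
        {v : E₁ ≃ₗ[K] E₁ // ∀ x : E₁,
          v (((u : E →ₗ[K] E).restrict hinv) x) = ((u : E →ₗ[K] E).restrict hinv) (v x)},
      ∀ a b c, (∀ x : E, c.1 x = a.1 (b.1 x)) →
        ∀ y : E₁, (φ c).1 y = (φ a).1 ((φ b).1 y) := by
  classical
  subst hE₁
  set U : Module.End K E := (u : Module.End K E) with hUdef
  set V : Module.End K E := (u.symm : Module.End K E) with hVdef
  set c : K := (p.eval 0)⁻¹ with hcdef
  set q : K[X] := c • p.reverse with hqdef
  have hc0 : c ≠ 0 := inv_ne_zero hp0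
  have hUV : U * V = 1 := by ext x; simp [hUdef, hVdef, Module.End.mul_apply]
  have hVU : V * U = 1 := by ext x; simp [hUdef, hVdef, Module.End.mul_apply]
  have hcomUV : Commute U V := by unfold Commute SemiconjBy; rw [hUV, hVU]
  -- skew symmetry
  have hskew : ∀ x y, B x y = - B y x := by
    intro x y
    have h := halt (x + y)
    simp only [map_add, LinearMap.add_apply, halt x, halt y] at h
    linear_combination h
  have hnd' : ∀ x, (∀ y, B y x = 0) → x = 0 := by
    intro x hx
    exact hnd x fun y => by rw [hskew, hx y, neg_zero]
  -- adjunction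
  have hBu : ∀ x y, B (u x) y = B x (u.symm y) := by
    intro x y
    conv_lhs => rw [show y = u (u.symm y) by simp, hu]
  have hBu' : ∀ x y, B x (u y) = B (u.symm x) y := by
    intro x y
    conv_lhs => rw [show x = u (u.symm x) by simp, hu]
  have hBpow : ∀ (n : ℕ) x y, B ((U ^ n) x) y = B x ((V ^ n) y) := by
    intro n
    induction n with
    | zero => simp
    | succ m ih =>
      intro x y
      rw [pow_succ, pow_succ']
      rw [Module.End.mul_apply, Module.End.mul_apply]
      rw [show (U (x)) = u x from rfl, ih (u x) y, hBu]
      rfl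
  have hadj : ∀ (f : K[X]) (x y : E), B ((aeval U f) x) y = B x ((aeval V f) y) := by
    intro f
    induction f using Polynomial.induction_on' with
    | add f g hf hg => intro x y; simp only [map_add, LinearMap.add_apply, map_add,
        LinearMap.map_add]; rw [hf, hg]
    | monomial n a =>
      intro x y
      rw [aeval_monomial, aeval_monomial]
      simp only [Module.End.mul_apply, Module.algebraMap_end_apply, map_smul,
        LinearMap.smul_apply]
      rw [hBpow]
  have hadj' : ∀ (f : K[X]) (x y : E), B x ((aeval U f) y) = B ((aeval V f) x) y := by
    intro f x y
    rw [hskew, hadj, ← hskew]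
  -- polynomial facts
  have hpne : p ≠ 0 := fun h => hp0 (by simp [h])
  have hptd : p.natTrailingDegree = 0 := by
    rw [natTrailingDegree_eq_zero]
    exact Or.inr (by rwa [coeff_zero_eq_eval_zero])
  have hrevdeg : p.reverse.natDegree = p.natDegree := by
    rw [reverse_natDegree, hptd, Nat.sub_zero]
  have hqdeg : q.natDegree = p.natDegree := by
    rw [hqdef, smul_eq_C_mul, natDegree_C_mul hc0, hrevdeg]
  have hqmonic : q.Monic := by
    have htc : p.reverse.leadingCoeff = p.eval 0 := by
      rw [reverse_leadingCoeff]
      unfold Polynomial.trailingCoeff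
      rw [hptd, coeff_zero_eq_eval_zero]
    unfold Polynomial.Monic
    rw [hqdef, smul_eq_C_mul, leadingCoeff_mul', leadingCoeff_C, htc,
      inv_mul_cancel₀ hp0]
    rw [leadingCoeff_C, htc]
    exact mul_ne_zero hc0 hp0
  have hcop : IsCoprime (p ^ k) (q ^ k) := by
    rcases Nat.eq_zero_or_pos k with hk | hk
    · subst hk; simp only [pow_zero]; exact isCoprime_one_left
    have hnd2 : ¬ p ∣ q := by
      intro hdvd
      apply hns
      obtain ⟨t, ht⟩ := hdvd
      have htne : t ≠ 0 := by
        rintro rfl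
        rw [mul_zero] at ht
        exact hqmonic.ne_zero ht
      have hdeg : t.natDegree = 0 := by
        have := hqdeg
        rw [ht, natDegree_mul hpne htne] at this
        omega
      obtain ⟨a, rfl⟩ := natDegree_eq_zero.mp hdeg
      have ha : a = 1 := by
        have := hqmonic
        rw [ht] at this
        unfold Polynomial.Monic at this
        rw [leadingCoeff_mul, hp.leadingCoeff, one_mul, leadingCoeff_C] at this
        exact this
      rw [ha, map_one, mul_one] at ht
      refine ⟨c⁻¹, ?_⟩
      calc p.reverse = c⁻¹ • q := by
            rw [hqdef, smul_smul, inv_mul_cancel₀ hc0, one_smul]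
        _ = c⁻¹ • p := by rw [ht]
    exact (hirr.coprime_iff_not_dvd.mpr hnd2).pow
  -- annihilation
  have hann : aeval U (p ^ k * q ^ k) = 0 := by
    rw [← hmin]; exact minpoly.aeval K U
  obtain ⟨a, b, hab⟩ := hcop
  set E₁ : Submodule K E := LinearMap.ker ((aeval U p) ^ k) with hE₁def
  set E₂ : Submodule K E := LinearMap.ker ((aeval U q) ^ k) with hE₂def
  have hmem1 : ∀ x : E, x ∈ E₁ ↔ aeval U (p ^ k) x = 0 := by
    intro x; rw [hE₁def, LinearMap.mem_ker, map_pow]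
  have hmem2 : ∀ x : E, x ∈ E₂ ↔ aeval U (q ^ k) x = 0 := by
    intro x; rw [hE₂def, LinearMap.mem_ker, map_pow]
  have hannx : ∀ x : E, aeval U (p ^ k) (aeval U (q ^ k) x) = 0 := by
    intro x
    rw [← Module.End.mul_apply, ← map_mul, hann, LinearMap.zero_apply]
  have hannx' : ∀ x : E, aeval U (q ^ k) (aeval U (p ^ k) x) = 0 := by
    intro x
    rw [← Module.End.mul_apply, ← map_mul, mul_comm, hann, LinearMap.zero_apply]
  have hdec : ∀ x : E, aeval U (a * p ^ k) x + aeval U (b * q ^ k) x = x := by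
    intro x
    rw [← LinearMap.add_apply, ← map_add, hab, map_one, Module.End.one_apply]
  have hmemd1 : ∀ x : E, aeval U (b * q ^ k) x ∈ E₁ := by
    intro x
    rw [hmem1, ← Module.End.mul_apply, ← map_mul]
    rw [show p ^ k * (b * q ^ k) = b * (p ^ k * q ^ k) by ring, map_mul,
      Module.End.mul_apply, hann, LinearMap.zero_apply, map_zero]
  have hmemd2 : ∀ x : E, aeval U (a * p ^ k) x ∈ E₂ := by
    intro x
    rw [hmem2, ← Module.End.mul_apply, ← map_mul]
    rw [show q ^ k * (a * p ^ k) = a * (p ^ k * q ^ k) by ring, map_mul,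
      Module.End.mul_apply, hann, LinearMap.zero_apply, map_zero]
  -- invariance of kernels under polynomials of U
  have hkinv : ∀ (f : K[X]) (x : E), x ∈ E₁ → aeval U f x ∈ E₁ := by
    intro f x hx
    rw [hmem1] at hx ⊢
    rw [← Module.End.mul_apply, ← map_mul, mul_comm, map_mul, Module.End.mul_apply, hx, map_zero]
  have hkinv2 : ∀ (f : K[X]) (x : E), x ∈ E₂ → aeval U f x ∈ E₂ := by
    intro f x hx
    rw [hmem2] at hx ⊢
    rw [← Module.End.mul_apply, ← map_mul, mul_comm, map_mul, Module.End.mul_apply, hx, map_zero]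
  have hdisj : ∀ x : E, x ∈ E₁ → x ∈ E₂ → x = 0 := by
    intro x h1 h2
    rw [hmem1] at h1; rw [hmem2] at h2
    have e1 : aeval U (a * p ^ k) x = 0 := by
      rw [map_mul, Module.End.mul_apply, h1, map_zero]
    have e2 : aeval U (b * q ^ k) x = 0 := by
      rw [map_mul, Module.End.mul_apply, h2, map_zero]
    rw [← hdec x, e1, e2, add_zero]
  -- key identities
  have hrev1 : aeval V q = c • (V ^ p.natDegree * aeval U p) := by
    have h0 := aux_rev U V hUV p
    have h1 : aeval V p.reverse = V ^ p.natDegree * aeval U p := by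
      have h2 : (V ^ p.natDegree) * (U ^ p.natDegree * aeval V p.reverse)
          = (V ^ p.natDegree) * aeval U p := by rw [h0]
      rwa [← mul_assoc, ← hcomUV.symm.mul_pow, hVU, one_pow, one_mul] at h2
    rw [hqdef, smul_eq_C_mul, map_mul, aeval_C, h1, Algebra.smul_def]
  have hrevq : p.reverse = (p.eval 0) • q := by
    rw [hqdef, smul_smul, mul_inv_cancel₀ hp0, one_smul]
  have hrev2 : aeval V p = (p.eval 0) • (V ^ p.natDegree * aeval U q) := by
    have h0 := aux_rev V U hVU p
    have h1 : aeval U p.reverse = (eval 0 p) • aeval U q := by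
      rw [hrevq, smul_eq_C_mul, map_mul, aeval_C, Algebra.smul_def]
    rw [← h0, h1, mul_smul_comm]
  have hcomVP : Commute (V ^ p.natDegree) (aeval U p) :=
    (aux_commute_aeval hcomUV.symm p).pow_left p.natDegree
  have hcomVQ : Commute (V ^ p.natDegree) (aeval U q) :=
    (aux_commute_aeval hcomUV.symm q).pow_left p.natDegree
  have hq1 : ∀ x ∈ E₁, aeval V (q ^ k) x = 0 := by
    intro x hx
    rw [hE₁def, LinearMap.mem_ker] at hx
    rw [map_pow, hrev1, _root_.smul_pow, hcomVP.mul_pow, LinearMap.smul_apply,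
      Module.End.mul_apply, hx, map_zero, smul_zero]
  have hq2 : ∀ x ∈ E₂, aeval V (p ^ k) x = 0 := by
    intro x hx
    rw [hE₂def, LinearMap.mem_ker] at hx
    rw [map_pow, hrev2, _root_.smul_pow, hcomVQ.mul_pow, LinearMap.smul_apply,
      Module.End.mul_apply, hx, map_zero, smul_zero]
  have hfix1 : ∀ y ∈ E₁, aeval U (q ^ k) (aeval U b y) = y := by
    intro y hy
    rw [hmem1] at hy
    have h2 : aeval U (a * p ^ k) y = 0 := by
      rw [map_mul, Module.End.mul_apply, hy, map_zero]
    have h3 := hdec y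
    rw [h2, zero_add] at h3
    rw [← Module.End.mul_apply, ← map_mul, mul_comm, h3]
  have hfix2 : ∀ y ∈ E₂, aeval U (p ^ k) (aeval U a y) = y := by
    intro y hy
    rw [hmem2] at hy
    have h2 : aeval U (b * q ^ k) y = 0 := by
      rw [map_mul, Module.End.mul_apply, hy, map_zero]
    have h3 := hdec y
    rw [h2, add_zero] at h3
    rw [← Module.End.mul_apply, ← map_mul, mul_comm, h3]
  have hiso1 : ∀ x ∈ E₁, ∀ y ∈ E₁, B x y = 0 := by
    intro x hx y hy
    rw [← hfix1 y hy, hadj', hq1 x hx]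
    simp
  have hiso2 : ∀ x ∈ E₂, ∀ y ∈ E₂, B x y = 0 := by
    intro x hx y hy
    rw [← hfix2 y hy, hadj', hq2 x hx]
    simp
  -- decomposition of arbitrary vectors
  have hsplit : ∀ x : E, ∃ x₁ ∈ E₁, ∃ x₂ ∈ E₂, x = x₁ + x₂ := by
    intro x
    exact ⟨aeval U (b * q ^ k) x, hmemd1 x, aeval U (a * p ^ k) x, hmemd2 x,
      by rw [add_comm, hdec x]⟩
  -- nondegenerate pairing between E₁ and E₂
  have hpair2 : ∀ x₂ ∈ E₂, (∀ x₁ ∈ E₁, B x₁ x₂ = 0) → x₂ = 0 := by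
    intro x₂ hx₂ h
    apply hnd'
    intro y
    obtain ⟨y₁, hy₁, y₂, hy₂, rfl⟩ := hsplit y
    rw [map_add, LinearMap.add_apply, h y₁ hy₁, hiso2 y₂ hy₂ x₂ hx₂, add_zero]
  have hpair1 : ∀ x₁ ∈ E₁, (∀ x₂ ∈ E₂, B x₁ x₂ = 0) → x₁ = 0 := by
    intro x₁ hx₁ h
    apply hnd
    intro y
    obtain ⟨y₁, hy₁, y₂, hy₂, rfl⟩ := hsplit y
    rw [map_add, hiso1 x₁ hx₁ y₁ hy₁, h y₂ hy₂, add_zero]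
  -- IsCompl
  have hcompl : IsCompl E₁ E₂ := by
    constructor
    · rw [disjoint_iff_inf_le]
      intro x hx
      exact hdisj x hx.1 hx.2
    · rw [codisjoint_iff_le_sup]
      intro x _
      obtain ⟨x₁, hx₁, x₂, hx₂, rfl⟩ := hsplit x
      exact Submodule.add_mem_sup hx₁ hx₂
  -- commuting maps preserve the kernels
  have hWcomm : ∀ (w : E →ₗ[K] E), (∀ x : E, w (u x) = u (w x)) →
      ∀ (f : K[X]) (x : E), w (aeval U f x) = aeval U f (w x) := by
    intro w hw f x
    have hcw : Commute w U := by
      ext y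
      show w (u y) = u (w y)
      exact hw y
    have h := aux_commute_aeval hcw f
    calc w (aeval U f x) = (w * aeval U f) x := rfl
      _ = (aeval U f * w) x := by rw [h]
      _ = aeval U f (w x) := rfl
  have hsymm_comm : ∀ (w : E ≃ₗ[K] E), (∀ x, w (u x) = u (w x)) →
      ∀ x, w.symm (u x) = u (w.symm x) := by
    intro w hw x
    apply w.injective
    rw [w.apply_symm_apply, hw (w.symm x), w.apply_symm_apply]
  have hWmem1 : ∀ (w : E →ₗ[K] E), (∀ x : E, w (u x) = u (w x)) →
      ∀ x ∈ E₁, w x ∈ E₁ := by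
    intro w hw x hx
    rw [hmem1] at hx ⊢
    rw [← hWcomm w hw, hx, map_zero]
  have hWmem2 : ∀ (w : E →ₗ[K] E), (∀ x : E, w (u x) = u (w x)) →
      ∀ x ∈ E₂, w x ∈ E₂ := by
    intro w hw x hx
    rw [hmem2] at hx ⊢
    rw [← hWcomm w hw, hx, map_zero]
  have hmapE1 : ∀ (w : E ≃ₗ[K] E), (∀ x, w (u x) = u (w x)) →
      Submodule.map (w : E →ₗ[K] E) E₁ = E₁ := by
    intro w hw
    apply le_antisymm
    · rintro _ ⟨x, hx, rfl⟩
      exact hWmem1 w hw x hx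
    · intro x hx
      refine ⟨w.symm x, hWmem1 (w.symm : E →ₗ[K] E) (hsymm_comm w hw) x hx, by simp⟩
  have hinv₂ : ∀ x ∈ E₂, (u : E →ₗ[K] E) x ∈ E₂ :=
    fun x hx => hWmem2 (u : E →ₗ[K] E) (fun _ => rfl) x hx
  have hinvV1 : ∀ x ∈ E₁, (u.symm : E →ₗ[K] E) x ∈ E₁ :=
    fun x hx => hWmem1 (u.symm : E →ₗ[K] E)
      (hsymm_comm u (fun _ => rfl)) x hx
  set r : E₁ →ₗ[K] E₁ := (u : E →ₗ[K] E).restrict hinv with hrdef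
  set r' : E₁ →ₗ[K] E₁ := (u.symm : E →ₗ[K] E).restrict hinvV1 with hr'def
  have hrapp : ∀ x : E₁, (r x : E) = u x := fun x => rfl
  have hr'app : ∀ x : E₁, (r' x : E) = u.symm x := fun x => rfl
  have hrr' : ∀ x : E₁, r (r' x) = x := by
    intro x; apply Subtype.ext
    rw [hrapp, hr'app]; simp
  have hr'r : ∀ x : E₁, r' (r x) = x := by
    intro x; apply Subtype.ext
    rw [hr'app, hrapp]; simp
  have hrinj : Function.Injective r := by
    intro x y hxy
    rw [← hr'r x, hxy, hr'r]
  set F : {w : E ≃ₗ[K] E // (∀ x y, B (w x) (w y) = B x y) ∧ ∀ x, w (u x) = u (w x)} →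
      {v : E₁ ≃ₗ[K] E₁ // ∀ x : E₁,
        v (((u : E →ₗ[K] E).restrict hinv) x) = ((u : E →ₗ[K] E).restrict hinv) (v x)} :=
    fun w => ⟨w.1.ofSubmodules E₁ E₁ (hmapE1 w.1 w.2.2), by
      intro x
      apply Subtype.ext
      rw [LinearEquiv.ofSubmodules_apply, LinearMap.restrict_apply, LinearMap.restrict_apply]
      exact w.2.2 x⟩ with hFdef
  have hFcoe : ∀ w (x : E₁), ((F w).1 x : E) = w.1 x := by
    intro w x
    rw [hFdef, LinearEquiv.ofSubmodules_apply]
  have hFinj : Function.Injective F := by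
    intro w w' h
    have hag : ∀ x ∈ E₁, w.1 x = w'.1 x := by
      intro x hx
      have h2 := congrArg (fun v => ((v.1 ⟨x, hx⟩ : E₁) : E)) h
      rwa [hFcoe, hFcoe] at h2
    have hag2 : ∀ x ∈ E₂, w.1 x = w'.1 x := by
      intro x₂ hx₂
      have hzmem : w.1 x₂ - w'.1 x₂ ∈ E₂ :=
        sub_mem (hWmem2 (w.1 : E →ₗ[K] E) w.2.2 x₂ hx₂)
          (hWmem2 (w'.1 : E →ₗ[K] E) w'.2.2 x₂ hx₂)
      have hz : ∀ y₁ ∈ E₁, B y₁ (w.1 x₂ - w'.1 x₂) = 0 := by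
        intro y₁ hy₁
        have htm : w.1.symm y₁ ∈ E₁ :=
          hWmem1 (w.1.symm : E →ₗ[K] E) (hsymm_comm w.1 w.2.2) y₁ hy₁
        have h1 : B y₁ (w.1 x₂) = B (w.1.symm y₁) x₂ := by
          conv_lhs => rw [show y₁ = w.1 (w.1.symm y₁) by simp]
          exact w.2.1 _ x₂
        have h2 : B y₁ (w'.1 x₂) = B (w.1.symm y₁) x₂ := by
          conv_lhs => rw [show y₁ = w.1 (w.1.symm y₁) by simp,
            hag (w.1.symm y₁) htm]
          exact w'.2.1 _ x₂
        rw [map_sub, h1, h2, sub_self]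
      have hzz := hpair2 _ hzmem hz
      rw [sub_eq_zero] at hzz
      exact hzz
    apply Subtype.ext
    apply LinearEquiv.toLinearMap_injective
    apply LinearMap.ext
    intro x
    obtain ⟨x₁, hx₁, x₂, hx₂, rfl⟩ := hsplit x
    show w.1 (x₁ + x₂) = w'.1 (x₁ + x₂)
    rw [map_add, map_add, hag x₁ hx₁, hag2 x₂ hx₂]
  have hFsurj : Function.Surjective F := by
    rintro ⟨v, hv⟩
    have hvsymm : ∀ x : E₁, v.symm (r x) = r (v.symm x) := by
      intro x
      apply v.injective
      rw [v.apply_symm_apply, hv (v.symm x), v.apply_symm_apply]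
    have hvsymm' : ∀ x : E₁, v.symm (r' x) = r' (v.symm x) := by
      intro x
      apply hrinj
      rw [← hvsymm (r' x), hrr', hrr']
    -- the pairing equivalence
    set Φ : E₂ →ₗ[K] Module.Dual K E₁ :=
      (E₁.subtype.dualMap).comp ((B.flip).domRestrict E₂) with hΦdef
    have hΦapp : ∀ (x₂ : E₂) (x₁ : E₁), Φ x₂ x₁ = B x₁ x₂ := fun _ _ => rfl
    set Ψ : E₁ →ₗ[K] Module.Dual K E₂ :=
      (E₂.subtype.dualMap).comp ((B.flip).domRestrict E₁) with hΨdef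
    have hΨapp : ∀ (x₁ : E₁) (x₂ : E₂), Ψ x₁ x₂ = B x₂ x₁ := fun _ _ => rfl
    have hΦker : ∀ z : E₂, Φ z = 0 → z = 0 := by
      intro z hz
      have hz2 : ∀ x₁ ∈ E₁, B x₁ (z : E) = 0 := by
        intro x₁ hx₁
        have := LinearMap.congr_fun hz ⟨x₁, hx₁⟩
        rwa [hΦapp, LinearMap.zero_apply] at this
      have := hpair2 (z : E) z.2 hz2
      exact Subtype.ext this
    have hΦinj : Function.Injective Φ := by
      intro x y hxy
      have := hΦker (x - y) (by rw [map_sub, hxy, sub_self])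
      rwa [sub_eq_zero] at this
    have hΨker : ∀ z : E₁, Ψ z = 0 → z = 0 := by
      intro z hz
      have hz2 : ∀ x₂ ∈ E₂, B (z : E) x₂ = 0 := by
        intro x₂ hx₂
        have := LinearMap.congr_fun hz ⟨x₂, hx₂⟩
        rw [hΨapp, LinearMap.zero_apply] at this
        rw [hskew, this, neg_zero]
      have := hpair1 (z : E) z.2 hz2
      exact Subtype.ext this
    have hΨinj : Function.Injective Ψ := by
      intro x y hxy
      have := hΨker (x - y) (by rw [map_sub, hxy, sub_self])
      rwa [sub_eq_zero] at this
    have hrank : Module.finrank K E₂ = Module.finrank K (Module.Dual K E₁) := by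
      have d1 : Module.finrank K (Module.Dual K E₁) = Module.finrank K E₁ :=
        Subspace.dual_finrank_eq
      have d2 : Module.finrank K (Module.Dual K E₂) = Module.finrank K E₂ :=
        Subspace.dual_finrank_eq
      have l1 : Module.finrank K E₂ ≤ Module.finrank K (Module.Dual K E₁) :=
        LinearMap.finrank_le_finrank_of_injective hΦinj
      have l2 : Module.finrank K E₁ ≤ Module.finrank K (Module.Dual K E₂) :=
        LinearMap.finrank_le_finrank_of_injective hΨinj
      omega
    have hΦbij : Function.Bijective Φ :=
      ⟨hΦinj, (LinearMap.injective_iff_surjective_of_finrank_eq_finrank hrank).mp hΦinj⟩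
    set Φe : E₂ ≃ₗ[K] Module.Dual K E₁ := LinearEquiv.ofBijective Φ hΦbij with hΦedef
    set w₂e : E₂ ≃ₗ[K] E₂ := (Φe.trans (v.symm.dualMap)).trans Φe.symm with hw₂edef
    have hw₂ : ∀ (x₁ : E₁) (x₂ : E₂), B x₁ (w₂e x₂) = B (v.symm x₁) x₂ := by
      intro x₁ x₂
      have h1 : Φe (w₂e x₂) = v.symm.dualMap (Φe x₂) := by
        rw [hw₂edef]
        simp only [LinearEquiv.trans_apply]
        exact Φe.apply_symm_apply _
      rw [hΦedef] at h1
      simp only [LinearEquiv.ofBijective_apply] at h1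
      have h3 := LinearMap.congr_fun h1 x₁
      rw [hΦapp] at h3
      rw [h3, LinearEquiv.dualMap_apply, hΦapp]
    have hw₂' : ∀ (x₁ : E₁) (x₂ : E₂), B (v x₁) (w₂e x₂) = B x₁ x₂ := by
      intro x₁ x₂
      rw [hw₂, v.symm_apply_apply]
    have hw₂comm : ∀ x₂ : E₂,
        (w₂e ⟨(u : E →ₗ[K] E) x₂, hinv₂ x₂ x₂.2⟩ : E) = u (w₂e x₂) := by
      intro x₂
      have hmem : (w₂e ⟨(u : E →ₗ[K] E) x₂, hinv₂ x₂ x₂.2⟩ : E) - u (w₂e x₂) ∈ E₂ := by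
        apply sub_mem (w₂e _).2
        exact hinv₂ _ (w₂e x₂).2
      have hzero : ∀ y ∈ E₁, B y ((w₂e ⟨(u : E →ₗ[K] E) x₂, hinv₂ x₂ x₂.2⟩ : E)
          - u (w₂e x₂)) = 0 := by
        intro y hy
        rw [map_sub]
        have e1 : B y (w₂e ⟨(u : E →ₗ[K] E) x₂, hinv₂ x₂ x₂.2⟩ : E)
            = B (u.symm ((v.symm ⟨y, hy⟩ : E₁) : E)) x₂ := by
          rw [hw₂ ⟨y, hy⟩]
          exact hBu' _ _
        have e2 : B y (u (w₂e x₂)) = B (u.symm ((v.symm ⟨y, hy⟩ : E₁) : E)) x₂ := by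
          rw [hBu']
          have : (⟨u.symm y, hinvV1 y hy⟩ : E₁) = r' ⟨y, hy⟩ := rfl
          have e3 := hw₂ (r' ⟨y, hy⟩) x₂
          rw [hvsymm'] at e3
          rw [show u.symm y = ((r' ⟨y, hy⟩ : E₁) : E) from rfl, e3, hr'app]
        rw [e1, e2, sub_self]
      have := hpair2 _ hmem hzero
      rwa [sub_eq_zero] at this
    -- assemble w
    set e : (E₁ × E₂) ≃ₗ[K] E := Submodule.prodEquivOfIsCompl E₁ E₂ hcompl with hedef
    set w : E ≃ₗ[K] E := (e.symm.trans (v.prodCongr w₂e)).trans e with hwdef0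
    have hwdef : ∀ (x₁ : E₁) (x₂ : E₂), w ((x₁ : E) + (x₂ : E)) = (v x₁ : E) + (w₂e x₂ : E) := by
      intro x₁ x₂
      have h0 : ((x₁ : E) + (x₂ : E)) = e (x₁, x₂) := rfl
      rw [h0, hwdef0]
      simp only [LinearEquiv.trans_apply, LinearEquiv.symm_apply_apply, LinearEquiv.prodCongr_apply]
      rfl
    have hwsymp : ∀ x y, B (w x) (w y) = B x y := by
      intro x y
      obtain ⟨x₁, hx₁, x₂, hx₂, rfl⟩ := hsplit x
      obtain ⟨y₁, hy₁, y₂, hy₂, rfl⟩ := hsplit y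
      rw [show x₁ + x₂ = ((⟨x₁, hx₁⟩ : E₁) : E) + ((⟨x₂, hx₂⟩ : E₂) : E) from rfl,
        show y₁ + y₂ = ((⟨y₁, hy₁⟩ : E₁) : E) + ((⟨y₂, hy₂⟩ : E₂) : E) from rfl,
        hwdef, hwdef]
      simp only [map_add, LinearMap.add_apply]
      rw [hiso1 _ (v ⟨x₁, hx₁⟩).2 _ (v ⟨y₁, hy₁⟩).2,
        hiso2 _ (w₂e ⟨x₂, hx₂⟩).2 _ (w₂e ⟨y₂, hy₂⟩).2,
        hw₂' ⟨x₁, hx₁⟩ ⟨y₂, hy₂⟩,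
        hskew ((w₂e ⟨x₂, hx₂⟩ : E₂) : E) ((v ⟨y₁, hy₁⟩ : E₁) : E),
        hw₂' ⟨y₁, hy₁⟩ ⟨x₂, hx₂⟩,
        hiso1 x₁ hx₁ y₁ hy₁, hiso2 x₂ hx₂ y₂ hy₂,
        hskew x₂ y₁]
    have hwcomm : ∀ x, w (u x) = u (w x) := by
      intro x
      obtain ⟨x₁, hx₁, x₂, hx₂, rfl⟩ := hsplit x
      have hux : u (x₁ + x₂) = ((r ⟨x₁, hx₁⟩ : E₁) : E) +
          ((⟨(u : E →ₗ[K] E) ((⟨x₂, hx₂⟩ : E₂) : E),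
            hinv₂ ((⟨x₂, hx₂⟩ : E₂) : E) (⟨x₂, hx₂⟩ : E₂).2⟩ : E₂) : E) := by
        rw [hrapp]
        simp [map_add]
      rw [hux, hwdef, hv ⟨x₁, hx₁⟩, hw₂comm ⟨x₂, hx₂⟩,
        show x₁ + x₂ = ((⟨x₁, hx₁⟩ : E₁) : E) + ((⟨x₂, hx₂⟩ : E₂) : E) from rfl, hwdef]
      rw [map_add, hrapp]
    refine ⟨⟨w, hwsymp, hwcomm⟩, ?_⟩
    apply Subtype.ext
    apply LinearEquiv.ext
    intro x
    apply Subtype.ext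
    rw [hFcoe ⟨w, hwsymp, hwcomm⟩ x]
    have h0 : (x : E) = (x : E) + ((0 : E₂) : E) := by simp
    rw [show w (x : E) = w ((x : E) + ((0 : E₂) : E)) by rw [← h0], hwdef, map_zero]
    show (v x : E) + ((0 : E₂) : E) = _
    simp
  refine ⟨Equiv.ofBijective F ⟨hFinj, hFsurj⟩, ?_⟩
  intro a1 b1 c1 hc y
  apply Subtype.ext
  show ((F c1).1 y : E) = ((F a1).1 ((F b1).1 y) : E)
  rw [hFcoe, hFcoe, hFcoe]
  exact hc y
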